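/- arXiv:1805.00858 — 8 statements merged into one kernel-verified Lean document; each statement's English description precedes it below -/
import Mathlib

section
/- Every simple graph G = (V,E) with an edge coloring c : E → {1,...,p} (not necessarily proper, all p colors used) has a subset S ⊂ V with ∅ ≠ S ≠ V such that the edge cut ∂S = {e ∈ E : e has exactly one endpoint in S} uses at least p/2 colors, i.e., |c(∂S)| ≥ p/2. -/
open Set

/-- The edge cut of `S`: edges of `G` with exactly one endpoint in `S`. -/
def cutEdges {V : Type*} (G : SimpleGraph V) (S : Set V) : Set (Sym2 V) :=
  {e | e ∈ G.edgeSet ∧ ∃ u v, e = s(u, v) ∧ u ∈ S ∧ v ∉ S}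

lemma flip_count {V : Type*} [Fintype V] [DecidableEq V] {u v : V} (huv : u ≠ v) :
    (Finset.univ.filter (fun f : V → Bool => f u ≠ f v)).card
      = 2 ^ (Fintype.card V - 1) := by
  have hbool : ∀ x y : Bool, x ≠ y → x = !y := by decide
  have hn : 1 ≤ Fintype.card V := Fintype.card_pos_iff.mpr ⟨u⟩
  have hm : Fintype.card V - 1 + 1 = Fintype.card V := by omega
  have hpow : 2 ^ Fintype.card V = 2 * 2 ^ (Fintype.card V - 1) := by
    calc 2 ^ Fintype.card V = 2 ^ (Fintype.card V - 1 + 1) := by rw [hm]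
      _ = 2 * 2 ^ (Fintype.card V - 1) := by ring
  have h1 : (Finset.univ.filter (fun f : V → Bool => f u ≠ f v)).card
      = (Finset.univ.filter (fun f : V → Bool => ¬ f u ≠ f v)).card := by
    apply Finset.card_bij' (fun f _ => Function.update f v (!(f v)))
      (fun f _ => Function.update f v (!(f v)))
    case hi =>
      intro f hf
      simp only [Finset.mem_filter, Finset.mem_univ, true_and, not_not] at hf ⊢
      simp only [Function.update_of_ne huv, Function.update_self]
      exact hbool _ _ hf
    case hj =>
      intro f hf
      simp only [Finset.mem_filter, Finset.mem_univ, true_and, not_not] at hf ⊢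
      simp [Function.update_of_ne huv, Function.update_self, hf]
    case left_inv =>
      intro f hf
      simp [Function.update_idem, Function.update_self, Function.update_eq_self]
    case right_inv =>
      intro f hf
      simp [Function.update_idem, Function.update_self, Function.update_eq_self]
  have h2 : (Finset.univ.filter (fun f : V → Bool => f u ≠ f v)).card
      + (Finset.univ.filter (fun f : V → Bool => ¬ f u ≠ f v)).card
      = (Finset.univ : Finset (V → Bool)).card :=
    Finset.card_filter_add_card_filter_not _
  have hcard : (Finset.univ : Finset (V → Bool)).card = 2 ^ Fintype.card V := by
    simp [Finset.card_univ]
  have h3 : 2 * (Finset.univ.filter (fun f : V → Bool => f u ≠ f v)).card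
      = 2 * 2 ^ (Fintype.card V - 1) := by
    rw [two_mul]
    nth_rewrite 2 [h1]
    rw [h2, hcard, hpow]
  exact Nat.eq_of_mul_eq_mul_left (by norm_num) h3

lemma arith_aux (q b : ℕ) : ¬ ((b + 1) * (q + 4) ≤ (q + 2) * b) := by nlinarith

/-- Every simple graph with a surjective edge coloring with `p` colors has a nontrivial
edge cut using at least `p/2` colors. -/
theorem stmt0 {V : Type*} [Fintype V] (hV : 2 ≤ Fintype.card V)
    (G : SimpleGraph V) (p : ℕ) (c : Sym2 V → Fin p)
    (hsurj : ∀ i : Fin p, ∃ e ∈ G.edgeSet, c e = i) :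
    ∃ S : Set V, S.Nonempty ∧ S ≠ Set.univ ∧ p ≤ 2 * (c '' cutEdges G S).ncard := by
  classical
  by_contra hcon
  push_neg at hcon
  set n := Fintype.card V with hn
  have hm : n - 1 + 1 = n := by omega
  have hpow : 2 ^ n = 2 * 2 ^ (n - 1) := by
    calc 2 ^ n = 2 ^ (n - 1 + 1) := by rw [hm]
      _ = 2 * 2 ^ (n - 1) := by ring
  have h2n : (4:ℕ) ≤ 2 ^ n := by
    calc (4:ℕ) = 2 ^ 2 := rfl
      _ ≤ 2 ^ n := Nat.pow_le_pow_right (by omega) (by omega)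
  set Sf : (V → Bool) → Set V := fun f => {v | f v = true} with hSf
  set D : (V → Bool) → Finset (Fin p) :=
    fun f => Finset.univ.filter (fun i => i ∈ c '' cutEdges G (Sf f)) with hD
  have hDcard : ∀ f, (c '' cutEdges G (Sf f)).ncard = (D f).card := by
    intro f
    rw [← Set.ncard_coe_finset]
    congr 1
    ext i
    simp [hD]
  -- per color bound
  have hi : ∀ i : Fin p,
      2 ^ (n - 1) ≤ (Finset.univ.filter (fun f : V → Bool => i ∈ D f)).card := by
    intro i
    obtain ⟨e, he, hce⟩ := hsurj i
    revert he hce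
    induction e using Sym2.ind with
    | _ u v =>
      intro he hce
      have huv : u ≠ v := (G.mem_edgeSet.mp he).ne
      rw [← flip_count huv]
      apply Finset.card_le_card
      intro f hf
      simp only [Finset.mem_filter, Finset.mem_univ, true_and] at hf ⊢
      simp only [hD, Finset.mem_filter, Finset.mem_univ, true_and]
      by_cases hu : f u = true
      · have hv : f v = false := by
          rcases Bool.eq_false_or_eq_true (f v) with h | h
          · exact absurd (hu.trans h.symm) hf
          · exact h
        exact ⟨s(u, v), ⟨he, u, v, rfl, hu, by simp [hSf, hv]⟩, hce⟩
      · have hu' : f u = false := by simpa using hu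
        have hv : f v = true := by
          rcases Bool.eq_false_or_eq_true (f v) with h | h
          · exact h
          · exact absurd (hu'.trans h.symm) hf
        exact ⟨s(u, v), ⟨he, v, u, Sym2.eq_swap, hv, by simp [hSf, hu']⟩, hce⟩
  -- double counting
  have swap : ∑ f : V → Bool, (D f).card
      = ∑ i : Fin p, (Finset.univ.filter (fun f : V → Bool => i ∈ D f)).card := by
    calc ∑ f : V → Bool, (D f).card
        = ∑ f : V → Bool, ∑ i : Fin p, (if i ∈ D f then 1 else 0) := by
          congr 1; ext f
          rw [Finset.sum_ite_mem, Finset.univ_inter, Finset.sum_const, smul_eq_mul,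
            mul_one]
      _ = ∑ i : Fin p, ∑ f : V → Bool, (if i ∈ D f then 1 else 0) := Finset.sum_comm
      _ = _ := by
          congr 1; ext i
          rw [Finset.card_filter]
  have sum_ge : p * 2 ^ (n - 1) ≤ ∑ f : V → Bool, (D f).card := by
    rw [swap]
    calc p * 2 ^ (n - 1) = ∑ _i : Fin p, 2 ^ (n - 1) := by simp [mul_comm]
      _ ≤ _ := Finset.sum_le_sum fun i _ => hi i
  -- upper bound
  set ct : V → Bool := fun _ => true with hct
  set cf : V → Bool := fun _ => false with hcf
  have hne : Nonempty V := Fintype.card_pos_iff.mp (by omega)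
  obtain ⟨a⟩ := hne
  have hpair : ct ≠ cf := by
    intro h
    have := congrFun h a
    simp [hct, hcf] at this
  set T : Finset (V → Bool) := Finset.univ \ {ct, cf} with hT
  have hTcard : T.card = 2 ^ n - 2 := by
    rw [hT, Finset.card_sdiff_of_subset (Finset.subset_univ _), Finset.card_pair hpair,
      Finset.card_univ]
    simp [hn]
  have hD0 : ∀ f ∈ ({ct, cf} : Finset (V → Bool)), (D f).card = 0 := by
    intro f hf
    rw [Finset.card_eq_zero]
    ext i
    simp only [hD, Finset.mem_filter, Finset.mem_univ, true_and, Finset.notMem_empty,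
      iff_false]
    rintro ⟨e, ⟨he, x, y, rfl, hx, hy⟩, hce⟩
    simp only [Finset.mem_insert, Finset.mem_singleton] at hf
    rcases hf with rfl | rfl
    · exact hy (by simp [hSf, hct])
    · simp [hSf, hcf] at hx
  have hDlt : ∀ f ∈ T, 2 * (D f).card ≤ p - 1 := by
    intro f hf
    rw [hT, Finset.mem_sdiff] at hf
    have hf1 : f ≠ ct := fun h => hf.2 (by simp [h])
    have hf2 : f ≠ cf := fun h => hf.2 (by simp [h])
    have hne1 : (Sf f).Nonempty := by
      by_contra h
      rw [Set.not_nonempty_iff_eq_empty] at h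
      apply hf2
      funext x
      have : x ∉ Sf f := h ▸ Set.notMem_empty x
      simpa [hSf, hcf] using this
    have hne2 : Sf f ≠ Set.univ := by
      intro h
      apply hf1
      funext x
      have : x ∈ Sf f := h ▸ Set.mem_univ x
      simpa [hSf, hct] using this
    have := hcon (Sf f) hne1 hne2
    rw [hDcard] at this
    exact Nat.le_sub_one_of_lt this
  have total : ∑ f : V → Bool, 2 * (D f).card ≤ (2 ^ n - 2) * (p - 1) := by
    rw [← Finset.sum_sdiff (Finset.subset_univ ({ct, cf} : Finset (V → Bool))), ← hT]
    have h2 : ∑ f ∈ ({ct, cf} : Finset (V → Bool)), 2 * (D f).card = 0 := by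
      apply Finset.sum_eq_zero
      intro f hf
      simp [hD0 f hf]
    rw [h2, add_zero]
    calc ∑ f ∈ T, 2 * (D f).card ≤ T.card • (p - 1) :=
        Finset.sum_le_card_nsmul T _ (p - 1) (fun f hf => hDlt f hf)
      _ = (2 ^ n - 2) * (p - 1) := by rw [smul_eq_mul, hTcard]
  have hsum2 : 2 * ∑ f : V → Bool, (D f).card = ∑ f : V → Bool, 2 * (D f).card :=
    Finset.mul_sum _ _ _
  have hp1 : 0 < p := by
    have := hcon {a} ⟨a, rfl⟩ (by
      intro h
      obtain ⟨x, y, hxy⟩ := Fintype.exists_pair_of_one_lt_card (by omega : 1 < Fintype.card V)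
      have hx : x ∈ ({a} : Set V) := h ▸ Set.mem_univ x
      have hy : y ∈ ({a} : Set V) := h ▸ Set.mem_univ y
      exact hxy (hx.trans hy.symm))
    exact lt_of_le_of_lt (Nat.zero_le _) this
  have hfinal : p * 2 ^ n ≤ (2 ^ n - 2) * (p - 1) := by
    calc p * 2 ^ n = 2 * (p * 2 ^ (n - 1)) := by rw [hpow]; ring
      _ ≤ 2 * ∑ f : V → Bool, (D f).card := mul_le_mul_right sum_ge 2
      _ = ∑ f : V → Bool, 2 * (D f).card := hsum2
      _ ≤ _ := total
  obtain ⟨b, hb⟩ : ∃ b, p = b + 1 := ⟨p - 1, (Nat.succ_pred_eq_of_pos hp1).symm⟩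
  obtain ⟨q, hq⟩ : ∃ q, 2 ^ n = q + 4 := ⟨2 ^ n - 4, (Nat.sub_add_cancel h2n).symm⟩
  rw [hb, hq, show q + 4 - 2 = q + 2 from rfl, show b + 1 - 1 = b from rfl] at hfinal
  exact arith_aux q b hfinal
end

section
/- Let G = (V,E) be a finite simple graph with edge coloring c : E → {1,...,p}. Construct G' by adding a new vertex v adjacent to all vertices of V, adding all missing edges between vertices of V, and coloring every new edge with a single new color p+1. Then G' (a complete graph on |V|+1 vertices) has a cut using all p+1 colors if and only if G has a cut using all p colors. -/
open Set

/-- The complete graph `G'` on `V ∪ {v}` obtained from `G` by adding a universal vertex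
and all missing edges, all colored with one new color `p+1`, has a cut using all `p+1`
colors iff `G` has a cut using all `p` colors. -/
theorem stmt6 {V : Type*} [Fintype V] (hV : 2 ≤ Fintype.card V)
    (G : SimpleGraph V) (p : ℕ) (c : Sym2 V → Fin p)
    (hsurj : ∀ i : Fin p, ∃ e ∈ G.edgeSet, c e = i)
    (c' : Sym2 (Option V) → Fin (p + 1))
    (hold : ∀ u v : V, G.Adj u v → c' s(some u, some v) = Fin.castSucc (c s(u, v)))
    (hnew : ∀ e ∈ (⊤ : SimpleGraph (Option V)).edgeSet,
      (¬ ∃ u v : V, G.Adj u v ∧ e = s(some u, some v)) → c' e = Fin.last p) :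
    (∃ S : Set (Option V), S.Nonempty ∧ S ≠ Set.univ ∧
        c' '' cutEdges (⊤ : SimpleGraph (Option V)) S = Set.univ) ↔
      (∃ S : Set V, S.Nonempty ∧ S ≠ Set.univ ∧ c '' cutEdges G S = Set.univ) := by
  constructor
  · rintro ⟨S', hne, -, hcut⟩
    rcases Nat.eq_zero_or_pos p with hp | hp
    · subst hp
      obtain ⟨a, b, hab⟩ := Fintype.exists_pair_of_one_lt_card (α := V) (by omega)
      refine ⟨{a}, ⟨a, rfl⟩, ?_, ?_⟩
      · intro h
        have hb : b ∈ ({a} : Set V) := by rw [h]; trivial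
        simp only [Set.mem_singleton_iff] at hb
        exact hab hb.symm
      · ext i; exact i.elim0
    · have key : ∀ i : Fin p, ∃ u v, G.Adj u v ∧ some u ∈ S' ∧ some v ∉ S' ∧
          c s(u, v) = i := by
        intro i
        have hmem : (Fin.castSucc i) ∈ c' '' cutEdges ⊤ S' := by rw [hcut]; trivial
        obtain ⟨e, ⟨heE, a, b, heq, haS, hbS⟩, hce⟩ := hmem
        have hex : ∃ u v : V, G.Adj u v ∧ e = s(some u, some v) := by
          by_contra hcon
          rw [hnew e heE hcon] at hce
          exact absurd hce.symm (Fin.castSucc_lt_last i).ne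
        obtain ⟨u, v, hadj, he2⟩ := hex
        have hci : c s(u, v) = i := by
          have := hold u v hadj
          rw [← he2, hce] at this
          exact (Fin.castSucc_injective p this.symm)
        rw [he2] at heq
        rw [Sym2.eq_iff] at heq
        rcases heq with ⟨ha, hb⟩ | ⟨ha, hb⟩
        · exact ⟨u, v, hadj, ha ▸ haS, hb ▸ hbS, hci⟩
        · exact ⟨v, u, hadj.symm, hb ▸ haS, ha ▸ hbS, by rw [Sym2.eq_swap]; exact hci⟩
      obtain ⟨u0, v0, -, hu0, hv0, -⟩ := key ⟨0, hp⟩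
      refine ⟨{u | some u ∈ S'}, ⟨u0, hu0⟩, ?_, ?_⟩
      · intro h
        rw [Set.eq_univ_iff_forall] at h
        exact hv0 (h v0)
      · rw [Set.eq_univ_iff_forall]
        intro i
        obtain ⟨u, v, hadj, hu, hv, hci⟩ := key i
        exact ⟨s(u, v), ⟨hadj, u, v, rfl, hu, hv⟩, hci⟩
  · rintro ⟨S, ⟨u0, hu0⟩, -, hcut⟩
    refine ⟨some '' S, ⟨some u0, ⟨u0, hu0, rfl⟩⟩, ?_, ?_⟩
    · intro h
      have : (none : Option V) ∈ some '' S := by rw [h]; trivial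
      obtain ⟨x, -, hx⟩ := this
      exact nomatch hx
    · rw [Set.eq_univ_iff_forall]
      intro i
      refine Fin.lastCases ?_ ?_ i
      · refine ⟨s(some u0, none), ⟨?_, some u0, none, rfl, ⟨u0, hu0, rfl⟩, ?_⟩, ?_⟩
        · simp [SimpleGraph.mem_edgeSet]
        · rintro ⟨x, -, hx⟩; exact nomatch hx
        · refine hnew _ (by simp [SimpleGraph.mem_edgeSet]) ?_
          rintro ⟨x, y, -, hxy⟩
          rw [Sym2.eq_iff] at hxy
          rcases hxy with ⟨-, h2⟩ | ⟨-, h2⟩ <;> exact nomatch h2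
      · intro i
        have hmem : i ∈ c '' cutEdges G S := by rw [hcut]; trivial
        obtain ⟨e, ⟨heE, u, v, heq, hu, hv⟩, hci⟩ := hmem
        subst heq
        have hadj : G.Adj u v := heE
        refine ⟨s(some u, some v), ⟨?_, some u, some v, rfl, ⟨u, hu, rfl⟩, ?_⟩, ?_⟩
        · simp [SimpleGraph.mem_edgeSet, hadj.ne]
        · rintro ⟨x, hx, hxeq⟩
          rw [Option.some.injEq] at hxeq
          exact hv (hxeq ▸ hx)
        · rw [hold u v hadj, hci]
end

section
/- Let G = (V,E) be an edge-colored graph with colors {1,...,p} and let λ be the maximum, over nontrivial subsets S ⊂ V, of |c(∂S)|. Fix a set S achieving λ and a set F ⊆ ∂S consisting of exactly one edge of each color appearing in ∂S. If some color i does not appear in ∂S, then the number of edges of color i is at most 2·(λ choose 2). -/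
open Set

private lemma two_mul_choose_two (n : ℕ) : 2 * Nat.choose n 2 = n * (n - 1) := by
  rw [Nat.choose_two_right]
  cases n with
  | zero => rfl
  | succ m =>
    have : (m + 1) * m = 2 * (m * (m + 1) / 2) := (Nat.two_mul_div_two_of_even
      (Nat.even_mul_succ_self m)).symm ▸ by ring
    simpa [Nat.mul_comm] using this.symm

/-- Claim on missing colors: if `S` achieves the maximum number `λ` of cut colors, `F`
consists of exactly one edge of each color of the cut, and color `i` is missing from the
cut, then the color class of `i` has at most `2 * (λ choose 2)` edges. -/
theorem stmt7 {V : Type*} [Fintype V] (G : SimpleGraph V) (p : ℕ) (c : Sym2 V → Fin p)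
    (S : Set V) (hS : S.Nonempty) (hS' : S ≠ Set.univ)
    (hmax : ∀ T : Set V, T.Nonempty → T ≠ Set.univ →
      (c '' cutEdges G T).ncard ≤ (c '' cutEdges G S).ncard)
    (F : Set (Sym2 V)) (hF : F ⊆ cutEdges G S) (hFinj : Set.InjOn c F)
    (hFimg : c '' F = c '' cutEdges G S)
    (i : Fin p) (hi : i ∉ c '' cutEdges G S) :
    {e ∈ G.edgeSet | c e = i}.ncard ≤ 2 * Nat.choose (c '' cutEdges G S).ncard 2 := by
  classical
  set X : Set (Sym2 V) := {e ∈ G.edgeSet | c e = i} with hX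
  have hrep : ∀ e : Sym2 V, ∃ u v : V, e = s(u, v) :=
    fun e => Sym2.ind (fun u v => ⟨u, v, rfl⟩) e
  rcases X.eq_empty_or_nonempty with hXe | hXne
  · simp [hXe]
  have : Nonempty V := by
    obtain ⟨e, he⟩ := hXne
    obtain ⟨u, v, rfl⟩ := hrep e
    exact ⟨u⟩
  set C : Set (Fin p) := c '' cutEdges G S with hC
  -- existence of a vertex outside S
  obtain ⟨w₀, hw₀⟩ : ∃ w, w ∉ S := by
    by_contra h; push_neg at h; exact hS' (Set.eq_univ_iff_forall.mpr h)
  -- unique endpoint lemmas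
  have uniqIn : ∀ f ∈ cutEdges G S, ∀ x y : V, x ∈ f → y ∈ f → x ∈ S → y ∈ S → x = y := by
    rintro f ⟨-, a, b, rfl, haS, hbS⟩ x y hx hy hxS hyS
    rw [Sym2.mem_iff] at hx hy
    rcases hx with rfl | rfl
    · rcases hy with rfl | rfl
      · rfl
      · exact absurd hyS hbS
    · exact absurd hxS hbS
  have uniqOut : ∀ f ∈ cutEdges G S, ∀ x y : V, x ∈ f → y ∈ f → x ∉ S → y ∉ S → x = y := by
    rintro f ⟨-, a, b, rfl, haS, hbS⟩ x y hx hy hxS hyS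
    rw [Sym2.mem_iff] at hx hy
    rcases hx with rfl | rfl
    · exact absurd haS hxS
    · rcases hy with rfl | rfl
      · exact absurd haS hyS
      · rfl
  -- the key moving lemma
  have key : ∀ u v : V, s(u, v) ∈ G.edgeSet → c s(u, v) = i →
      ((u ∈ S ∧ v ∈ S) ∨ (u ∉ S ∧ v ∉ S)) → ∃ f ∈ F, u ∈ f := by
    intro u v he hci hside
    by_contra hcon
    push_neg at hcon
    have hne : u ≠ v := (G.ne_of_adj (G.mem_edgeSet.mp he))
    have hT : ∃ T : Set V, T.Nonempty ∧ T ≠ Set.univ ∧ s(u, v) ∈ cutEdges G T ∧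
        ∀ f ∈ F, f ∈ cutEdges G T := by
      rcases hside with ⟨huS, hvS⟩ | ⟨huS, hvS⟩
      · refine ⟨S \ {u}, ⟨v, hvS, by simpa using hne.symm⟩, ?_, ?_, ?_⟩
        · intro h
          exact hw₀ ((h ▸ (Set.mem_univ w₀) : w₀ ∈ S \ {u})).1
        · exact ⟨he, v, u, Sym2.eq_swap.symm, ⟨hvS, by simpa using hne.symm⟩,
            fun h => h.2 rfl⟩
        · intro f hf
          obtain ⟨hfe, a, b, hab, haS, hbS⟩ := hF hf
          have hau : a ≠ u := fun h => hcon f hf (by rw [hab, h]; exact Sym2.mem_mk_left u b)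
          exact ⟨hfe, a, b, hab, ⟨haS, hau⟩, fun h => hbS h.1⟩
      · refine ⟨insert u S, ⟨u, Set.mem_insert u S⟩, ?_, ?_, ?_⟩
        · intro h
          have hv : v ∈ insert u S := h ▸ Set.mem_univ v
          rcases hv with h' | h'
          · exact hne h'.symm
          · exact hvS h'
        · exact ⟨he, u, v, rfl, Set.mem_insert u S, by
            intro h; rcases h with h' | h'
            · exact hne h'.symm
            · exact hvS h'⟩
        · intro f hf
          obtain ⟨hfe, a, b, hab, haS, hbS⟩ := hF hf
          have hbu : b ≠ u := fun h => hcon f hf (by rw [hab, h]; exact Sym2.mem_mk_right a u)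
          exact ⟨hfe, a, b, hab, Set.mem_insert_of_mem u haS, by
            intro h; rcases h with h' | h'
            · exact hbu h'
            · exact hbS h'⟩
    obtain ⟨T, hT1, hT2, heT, hFT⟩ := hT
    have hsub : insert i C ⊆ c '' cutEdges G T := by
      intro j hj
      rcases Set.mem_insert_iff.mp hj with rfl | hj
      · exact ⟨s(u, v), heT, hci⟩
      · have hj' : j ∈ c '' F := by rw [hFimg]; exact hj
        obtain ⟨f, hf, rfl⟩ := hj'
        exact ⟨f, hFT f hf, rfl⟩
    have h1 : (insert i C).ncard = C.ncard + 1 := Set.ncard_insert_of_notMem hi (Set.toFinite _)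
    have h2 := Set.ncard_le_ncard hsub (Set.toFinite _)
    have h3 := hmax T hT1 hT2
    rw [h1] at h2
    omega
  -- decoder functions
  let fOf : Fin p → Sym2 V := fun j =>
    if h : ∃ f, f ∈ F ∧ c f = j then h.choose
    else s(Classical.arbitrary V, Classical.arbitrary V)
  have hfOf : ∀ f ∈ F, fOf (c f) = f := by
    intro f hf
    have h : ∃ f', f' ∈ F ∧ c f' = c f := ⟨f, hf, rfl⟩
    simp only [fOf, dif_pos h]
    exact hFinj h.choose_spec.1 hf h.choose_spec.2
  let epIn : Sym2 V → V := fun f =>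
    if h : ∃ x, x ∈ f ∧ x ∈ S then h.choose else Classical.arbitrary V
  have hepIn : ∀ f ∈ cutEdges G S, ∀ u : V, u ∈ f → u ∈ S → epIn f = u := by
    intro f hfcut u hu huS
    have h : ∃ x, x ∈ f ∧ x ∈ S := ⟨u, hu, huS⟩
    simp only [epIn, dif_pos h]
    exact uniqIn f hfcut _ u h.choose_spec.1 hu h.choose_spec.2 huS
  let epOut : Sym2 V → V := fun f =>
    if h : ∃ x, x ∈ f ∧ x ∉ S then h.choose else Classical.arbitrary V
  have hepOut : ∀ f ∈ cutEdges G S, ∀ u : V, u ∈ f → u ∉ S → epOut f = u := by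
    intro f hfcut u hu huS
    have h : ∃ x, x ∈ f ∧ x ∉ S := ⟨u, hu, huS⟩
    simp only [epOut, dif_pos h]
    exact uniqOut f hfcut _ u h.choose_spec.1 hu h.choose_spec.2 huS
  let Dec : Fin p × Fin p → Sym2 V := fun jk =>
    if jk.1 < jk.2 then s(epIn (fOf jk.1), epIn (fOf jk.2))
    else s(epOut (fOf jk.1), epOut (fOf jk.2))
  -- main surjectivity claim
  have main : X ⊆ Dec '' C.offDiag := by
    intro e he
    obtain ⟨u, v, rfl⟩ := hrep e
    obtain ⟨hee, hci⟩ := he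
    have hne : u ≠ v := (G.ne_of_adj (G.mem_edgeSet.mp hee))
    -- both endpoints on the same side
    have hnc : s(u, v) ∉ cutEdges G S := fun h => hi ⟨s(u, v), h, hci⟩
    have hside : (u ∈ S ∧ v ∈ S) ∨ (u ∉ S ∧ v ∉ S) := by
      by_cases huS : u ∈ S
      · by_cases hvS : v ∈ S
        · exact Or.inl ⟨huS, hvS⟩
        · exact absurd ⟨hee, u, v, rfl, huS, hvS⟩ hnc
      · by_cases hvS : v ∈ S
        · exact absurd ⟨hee, v, u, Sym2.eq_swap.symm, hvS, huS⟩ hnc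
        · exact Or.inr ⟨huS, hvS⟩
    obtain ⟨fu, hfu, hufu⟩ := key u v hee hci hside
    obtain ⟨fv, hfv, hvfv⟩ := key v u (Sym2.eq_swap ▸ hee) (Sym2.eq_swap ▸ hci)
      (by tauto)
    have hjC : c fu ∈ C := by rw [← hFimg]; exact ⟨fu, hfu, rfl⟩
    have hkC : c fv ∈ C := by rw [← hFimg]; exact ⟨fv, hfv, rfl⟩
    have hjk : c fu ≠ c fv := by
      intro h
      have hfeq : fu = fv := hFinj hfu hfv h
      rcases hside with ⟨huS, hvS⟩ | ⟨huS, hvS⟩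
      · exact hne (uniqIn fu (hF hfu) u v hufu (hfeq ▸ hvfv) huS hvS)
      · exact hne (uniqOut fu (hF hfu) u v hufu (hfeq ▸ hvfv) huS hvS)
    rcases hside with ⟨huS, hvS⟩ | ⟨huS, hvS⟩
    · rcases lt_or_gt_of_ne hjk with hlt | hlt
      · refine ⟨(c fu, c fv), ⟨hjC, hkC, hjk⟩, ?_⟩
        simp only [Dec, if_pos hlt, hfOf fu hfu, hfOf fv hfv,
          hepIn fu (hF hfu) u hufu huS, hepIn fv (hF hfv) v hvfv hvS]
      · refine ⟨(c fv, c fu), ⟨hkC, hjC, hjk.symm⟩, ?_⟩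
        simp only [Dec, if_pos hlt, hfOf fu hfu, hfOf fv hfv,
          hepIn fu (hF hfu) u hufu huS, hepIn fv (hF hfv) v hvfv hvS]
        exact Sym2.eq_swap
    · rcases lt_or_gt_of_ne hjk with hlt | hlt
      · refine ⟨(c fv, c fu), ⟨hkC, hjC, hjk.symm⟩, ?_⟩
        have : ¬ (c fv < c fu) := not_lt_of_gt hlt
        simp only [Dec, if_neg this, hfOf fu hfu, hfOf fv hfv,
          hepOut fu (hF hfu) u hufu huS, hepOut fv (hF hfv) v hvfv hvS]
        exact Sym2.eq_swap
      · refine ⟨(c fu, c fv), ⟨hjC, hkC, hjk⟩, ?_⟩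
        have : ¬ (c fu < c fv) := not_lt_of_gt hlt
        simp only [Dec, if_neg this, hfOf fu hfu, hfOf fv hfv,
          hepOut fu (hF hfu) u hufu huS, hepOut fv (hF hfv) v hvfv hvS]
  -- counting
  have hCfin : C.Finite := Set.toFinite _
  have hcount : C.offDiag.ncard = C.ncard * C.ncard - C.ncard := by
    rw [← hCfin.coe_toFinset, ← Finset.coe_offDiag, Set.ncard_coe_finset,
      Finset.offDiag_card, Set.ncard_coe_finset]
  calc X.ncard ≤ (Dec '' C.offDiag).ncard := Set.ncard_le_ncard main (Set.toFinite _)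
    _ ≤ C.offDiag.ncard := Set.ncard_image_le (Set.toFinite _)
    _ ≤ 2 * Nat.choose C.ncard 2 := by
        rw [hcount, two_mul_choose_two]
        cases h : C.ncard with
        | zero => simp
        | succ m => simp [Nat.succ_mul, Nat.mul_succ]
end

section
/- Let G = (V,E) be a finite simple graph with edge coloring c : E → {1,...,p}, and suppose color class E_i = {e : c(e) = i} satisfies |E_i| > 2·(p choose 2). Then every maximum colored cut of G contains color i; that is, for every nontrivial S ⊂ V with |c(∂S)| maximum, i ∈ c(∂S). -/
open Set

lemma cutEdges_compl {V : Type*} (G : SimpleGraph V) (S : Set V) :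
    cutEdges G Sᶜ = cutEdges G S := by
  ext e
  constructor
  · rintro ⟨he, u, v, rfl, hu, hv⟩
    exact ⟨he, v, u, Sym2.eq_swap, not_not.1 hv, hu⟩
  · rintro ⟨he, u, v, rfl, hu, hv⟩
    exact ⟨he, v, u, Sym2.eq_swap, hv, not_not.2 hu⟩

/-- If all cut edges of color `j` pass through `u` (for `u, u' ∈ S`), the vertex is unique. -/
lemma pgood_inj {V : Type*} {p : ℕ} (G : SimpleGraph V) (c : Sym2 V → Fin p) (S : Set V)
    {j : Fin p} {u u' : V} (hu : u ∈ S) (hu' : u' ∈ S)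
    (hjm : j ∈ c '' cutEdges G S)
    (h2 : ∀ e ∈ cutEdges G S, c e = j → u ∈ e)
    (h2' : ∀ e ∈ cutEdges G S, c e = j → u' ∈ e) : u = u' := by
  obtain ⟨e, he, hce⟩ := hjm
  have hue := h2 e he hce
  have hue' := h2' e he hce
  obtain ⟨_, x, y, rfl, hx, hy⟩ := he
  rcases Sym2.mem_iff.1 hue with rfl | rfl
  · rcases Sym2.mem_iff.1 hue' with rfl | rfl
    · rfl
    · exact absurd hu' hy
  · exact absurd hu hy

lemma key {V : Type*} [Fintype V] {p : ℕ} (G : SimpleGraph V) (c : Sym2 V → Fin p)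
    (i : Fin p) (S : Set V)
    (hmax : ∀ T : Set V, T.Nonempty → T ≠ Set.univ →
      (c '' cutEdges G T).ncard ≤ (c '' cutEdges G S).ncard)
    (hni : i ∉ c '' cutEdges G S)
    {u v : V} (hu : u ∈ S) (hv : v ∈ S) (hadj : G.Adj u v) (hc : c s(u, v) = i) :
    ∃ j, j ∈ c '' cutEdges G S ∧ ∀ e ∈ cutEdges G S, c e = j → u ∈ e := by
  set T := S \ {u} with hT
  have hne : u ≠ v := hadj.ne
  have hTne : T.Nonempty := ⟨v, hv, hne.symm⟩
  have hTu : T ≠ Set.univ := by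
    intro h
    have : u ∈ T := h ▸ Set.mem_univ u
    exact this.2 rfl
  have hiT : i ∈ c '' cutEdges G T :=
    ⟨s(u, v), ⟨G.mem_edgeSet.2 hadj, v, u, Sym2.eq_swap, ⟨hv, hne.symm⟩, fun h => h.2 rfl⟩, hc⟩
  by_contra hcon
  push_neg at hcon
  have hsub : c '' cutEdges G S ⊆ c '' cutEdges G T := by
    intro j hj
    obtain ⟨e, he, hce, hue⟩ := hcon j hj
    obtain ⟨heE, x, y, rfl, hx, hy⟩ := he
    refine ⟨s(x, y), ⟨heE, x, y, rfl, ⟨hx, ?_⟩, fun h => hy h.1⟩, hce⟩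
    intro h
    exact hue (by simp [Set.mem_singleton_iff.1 h])
  have hins : insert i (c '' cutEdges G S) ⊆ c '' cutEdges G T := Set.insert_subset hiT hsub
  have h1 : (insert i (c '' cutEdges G S)).ncard ≤ (c '' cutEdges G T).ncard :=
    Set.ncard_le_ncard hins (Set.toFinite _)
  rw [Set.ncard_insert_of_notMem hni (Set.toFinite _)] at h1
  have h2 := hmax T hTne hTu
  omega

lemma count_le {V : Type*} [Fintype V] {p : ℕ} (G : SimpleGraph V) (c : Sym2 V → Fin p)
    (i : Fin p) (S : Set V)
    (hmax : ∀ T : Set V, T.Nonempty → T ≠ Set.univ →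
      (c '' cutEdges G T).ncard ≤ (c '' cutEdges G S).ncard)
    (hni : i ∉ c '' cutEdges G S) :
    {e | e ∈ G.edgeSet ∧ c e = i ∧ ∀ x ∈ e, x ∈ S}.ncard ≤ Nat.choose p 2 := by
  classical
  set A : Set (Sym2 V) := {e | e ∈ G.edgeSet ∧ c e = i ∧ ∀ x ∈ e, x ∈ S} with hA
  set Pg : Fin p → V → Prop :=
    fun j u => j ∈ c '' cutEdges G S ∧ ∀ e ∈ cutEdges G S, c e = j → u ∈ e with hPg
  set R : Sym2 V → Sym2 (Fin p) → Prop := fun e z =>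
    ∃ u v j1 j2, u ∈ S ∧ v ∈ S ∧ u ≠ v ∧ e = s(u, v) ∧ z = s(j1, j2) ∧ Pg j1 u ∧ Pg j2 v
    with hR
  have hex : ∀ e ∈ A, ∃ z, R e z := by
    intro e
    induction e using Sym2.ind with
    | _ u v =>
      rintro ⟨heE, hci, hins⟩
      have hadj : G.Adj u v := G.mem_edgeSet.1 heE
      have hu : u ∈ S := hins u (by simp)
      have hv : v ∈ S := hins v (by simp)
      obtain ⟨j1, hj1⟩ := key G c i S hmax hni hu hv hadj hci
      obtain ⟨j2, hj2⟩ := key G c i S hmax hni hv hu hadj.symm (by rwa [Sym2.eq_swap])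
      exact ⟨s(j1, j2), u, v, j1, j2, hu, hv, hadj.ne, rfl, rfl, hj1, hj2⟩
  set f : Sym2 V → Sym2 (Fin p) := fun e => if h : ∃ z, R e z then h.choose else s(i, i) with hf
  have hfR : ∀ e ∈ A, R e (f e) := by
    intro e he
    simp only [hf, dif_pos (hex e he)]
    exact (hex e he).choose_spec
  have hmain : A.ncard ≤ ({z : Sym2 (Fin p) | ¬ z.IsDiag}).ncard := by
    apply Set.ncard_le_ncard_of_injOn f
    · intro e he
      obtain ⟨u, v, j1, j2, hu, hv, huv, he1, hz, h1, h2⟩ := hfR e he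
      rw [hz]
      simp only [Set.mem_setOf_eq, Sym2.mk_isDiag_iff]
      intro h
      exact huv (pgood_inj G c S hu hv h1.1 h1.2 (h ▸ h2.2))
    · intro e he e' he' hfe
      obtain ⟨u, v, j1, j2, hu, hv, huv, he1, hz, h1, h2⟩ := hfR e he
      obtain ⟨u', v', j1', j2', hu', hv', huv', he1', hz', h1', h2'⟩ := hfR e' he'
      rw [hfe, hz'] at hz
      rcases Sym2.eq_iff.1 hz with ⟨rfl, rfl⟩ | ⟨rfl, rfl⟩
      · have e1 : u = u' := pgood_inj G c S hu hu' h1.1 h1.2 h1'.2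
        have e2 : v = v' := pgood_inj G c S hv hv' h2.1 h2.2 h2'.2
        rw [he1, he1', e1, e2]
      · have e1 : u = v' := pgood_inj G c S hu hv' h1.1 h1.2 h2'.2
        have e2 : v = u' := pgood_inj G c S hv hu' h2.1 h2.2 h1'.2
        rw [he1, he1', e1, e2, Sym2.eq_swap]
  have hcard : ({z : Sym2 (Fin p) | ¬ z.IsDiag}).ncard = Nat.choose p 2 := by
    have := Sym2.card_subtype_not_diag (α := Fin p)
    simp only [Fintype.card_fin] at this
    rw [Set.ncard_eq_toFinset_card', Set.toFinset_card, ← this]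
    exact Fintype.card_congr (Equiv.subtypeEquivRight fun z => Iff.rfl)
  omega

/-- If color class `i` has more than `2 * (p choose 2)` edges, then color `i` appears in
every maximum colored cut. -/
theorem stmt8 {V : Type*} [Fintype V] (G : SimpleGraph V) (p : ℕ) (c : Sym2 V → Fin p)
    (i : Fin p) (hi : 2 * Nat.choose p 2 < {e ∈ G.edgeSet | c e = i}.ncard) :
    ∀ S : Set V, S.Nonempty → S ≠ Set.univ →
      (∀ T : Set V, T.Nonempty → T ≠ Set.univ →
        (c '' cutEdges G T).ncard ≤ (c '' cutEdges G S).ncard) →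
      i ∈ c '' cutEdges G S := by
  intro S hS1 hS2 hmax
  by_contra hni
  have hmax' : ∀ T : Set V, T.Nonempty → T ≠ Set.univ →
      (c '' cutEdges G T).ncard ≤ (c '' cutEdges G Sᶜ).ncard := by
    intro T hT1 hT2
    rw [cutEdges_compl]
    exact hmax T hT1 hT2
  have hni' : i ∉ c '' cutEdges G Sᶜ := by rwa [cutEdges_compl]
  have h1 := count_le G c i S hmax hni
  have h2 := count_le G c i Sᶜ hmax' hni'
  have hsub : {e ∈ G.edgeSet | c e = i} ⊆
      {e | e ∈ G.edgeSet ∧ c e = i ∧ ∀ x ∈ e, x ∈ S} ∪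
      {e | e ∈ G.edgeSet ∧ c e = i ∧ ∀ x ∈ e, x ∈ Sᶜ} := by
    intro e
    induction e using Sym2.ind with
    | _ u v =>
      rintro ⟨heE, hci⟩
      by_cases hu : u ∈ S <;> by_cases hv : v ∈ S
      · left
        refine ⟨heE, hci, fun x hx => ?_⟩
        rcases Sym2.mem_iff.1 hx with rfl | rfl <;> assumption
      · exact absurd ⟨s(u, v), ⟨heE, u, v, rfl, hu, hv⟩, hci⟩ hni
      · exact absurd ⟨s(u, v), ⟨heE, v, u, Sym2.eq_swap, hv, hu⟩, hci⟩ hni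
      · right
        refine ⟨heE, hci, fun x hx => ?_⟩
        rcases Sym2.mem_iff.1 hx with rfl | rfl <;> assumption
  have h3 := Set.ncard_le_ncard hsub (Set.toFinite _)
  have h4 := Set.ncard_union_le {e | e ∈ G.edgeSet ∧ c e = i ∧ ∀ x ∈ e, x ∈ S}
    {e | e ∈ G.edgeSet ∧ c e = i ∧ ∀ x ∈ e, x ∈ Sᶜ}
  omega
end

section
/- Let G = (V,E) be a finite simple graph with edge coloring c : E → {1,...,p} and fix a color i with |E_i| > 2·(p choose 2), where E_i is the set of edges of color i. Let G' = (V, E \ E_i) with the induced coloring. Then the maximum number of colors in a cut of G equals one plus the maximum number of colors in a cut of G'. -/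
open Set

lemma cut_upper {V : Type*} (G : SimpleGraph V) {p : ℕ} (c : Sym2 V → Fin p) (i : Fin p)
    (T : Set V) :
    (c '' cutEdges G T).ncard ≤ (c '' cutEdges (G.deleteEdges {e | c e = i}) T).ncard + 1 := by
  have hsub : c '' cutEdges G T ⊆ insert i (c '' cutEdges (G.deleteEdges {e | c e = i}) T) := by
    rintro x ⟨e, ⟨heE, u, v, rfl, hu, hv⟩, rfl⟩
    by_cases hce : c s(u, v) = i
    · rw [hce]; exact Set.mem_insert _ _
    · exact Set.mem_insert_of_mem _
        ⟨s(u, v), ⟨by rw [SimpleGraph.edgeSet_deleteEdges]; exact ⟨heE, hce⟩,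
          u, v, rfl, hu, hv⟩, rfl⟩
  calc (c '' cutEdges G T).ncard
      ≤ (insert i (c '' cutEdges (G.deleteEdges {e | c e = i}) T)).ncard :=
        Set.ncard_le_ncard hsub (Set.toFinite _)
    _ ≤ _ + 1 := Set.ncard_insert_le _ _

lemma cut_main {V : Type*} (G : SimpleGraph V) {p : ℕ} (c : Sym2 V → Fin p) (i : Fin p)
    (hi : 2 * Nat.choose p 2 < {e ∈ G.edgeSet | c e = i}.ncard)
    (S : Set V) (hne : S.Nonempty) (hSu : S ≠ Set.univ) :
    ∃ T : Set V, T.Nonempty ∧ T ≠ Set.univ ∧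
      (c '' cutEdges (G.deleteEdges {e | c e = i}) S).ncard + 1 ≤ (c '' cutEdges G T).ncard := by
  classical
  set G' := G.deleteEdges {e | c e = i} with hG'
  set K := cutEdges G' S with hK
  set C := c '' K with hC
  have hKE : ∀ e ∈ K, e ∈ G.edgeSet ∧ c e ≠ i := by
    rintro e ⟨heE, -⟩
    rw [hG', SimpleGraph.edgeSet_deleteEdges] at heE
    exact ⟨heE.1, heE.2⟩
  have hKsub : K ⊆ cutEdges G S := by
    rintro e ⟨heE, hrest⟩
    exact ⟨(hKE e ⟨heE, hrest⟩).1, hrest⟩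
  have hiC : i ∉ C := by
    rintro ⟨e, heK, hce⟩
    exact (hKE e heK).2 hce
  by_cases hcross : ∃ u v, G.Adj u v ∧ c s(u, v) = i ∧ u ∈ S ∧ v ∉ S
  · refine ⟨S, hne, hSu, ?_⟩
    obtain ⟨u, v, hadj, hci, huS, hvS⟩ := hcross
    have hsub : insert i C ⊆ c '' cutEdges G S := by
      rintro x (rfl | ⟨e, heK, rfl⟩)
      · exact ⟨s(u, v), ⟨G.mem_edgeSet.2 hadj, u, v, rfl, huS, hvS⟩, hci⟩
      · exact ⟨e, hKsub heK, rfl⟩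
    calc C.ncard + 1 = (insert i C).ncard := (Set.ncard_insert_of_notMem hiC (Set.toFinite _)).symm
      _ ≤ _ := Set.ncard_le_ncard hsub (Set.toFinite _)
  · push_neg at hcross
    have hsame : ∀ u v, G.Adj u v → c s(u, v) = i → (u ∈ S ↔ v ∈ S) := by
      intro u v hadj hci
      constructor
      · exact fun hu => hcross u v hadj hci hu
      · intro hv
        exact hcross v u hadj.symm (by rwa [Sym2.eq_swap]) hv
    by_cases hgood : ∃ v, (∃ u, G.Adj u v ∧ c s(u, v) = i) ∧
        ∀ j ∈ C, ∃ f ∈ K, c f = j ∧ v ∉ f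
    · -- flip the good vertex v
      obtain ⟨v, ⟨u, hadj, hci⟩, hgoodv⟩ := hgood
      have huv : u ≠ v := hadj.ne
      have hsides : u ∈ S ↔ v ∈ S := hsame u v hadj hci
      set T := if v ∈ S then S \ {v} else insert v S with hT
      have hmemT : ∀ w, w ≠ v → (w ∈ T ↔ w ∈ S) := by
        intro w hw
        by_cases hvS : v ∈ S <;> simp [hT, hvS, hw, Ne.symm hw]
      have hvT : v ∈ T ↔ v ∉ S := by
        by_cases hvS : v ∈ S <;> simp [hT, hvS]
      have hTne : T.Nonempty := by
        by_cases hvS : v ∈ S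
        · exact ⟨u, (hmemT u huv).2 (hsides.2 hvS)⟩
        · exact ⟨v, hvT.2 hvS⟩
      have hTuniv : T ≠ Set.univ := by
        intro h
        by_cases hvS : v ∈ S
        · exact (hvT.1 (h ▸ Set.mem_univ v)) hvS
        · exact hvS (hsides.1 ((hmemT u huv).1 (h ▸ Set.mem_univ u)))
      refine ⟨T, hTne, hTuniv, ?_⟩
      have hsub : insert i C ⊆ c '' cutEdges G T := by
        rintro x (rfl | ⟨e, heK, rfl⟩)
        · by_cases huS : u ∈ S
          · exact ⟨s(u, v), ⟨G.mem_edgeSet.2 hadj, u, v, rfl,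
              (hmemT u huv).2 huS, fun h => (hvT.1 h) (hsides.1 huS)⟩, hci⟩
          · refine ⟨s(u, v), ⟨G.mem_edgeSet.2 hadj, v, u, Sym2.eq_swap,
              hvT.2 (fun hv => huS (hsides.2 hv)), fun h => huS ((hmemT u huv).1 h)⟩, hci⟩
        · obtain ⟨f, hfK, hcf, hvf⟩ := hgoodv (c e) ⟨e, heK, rfl⟩
          obtain ⟨hfE, a, b, rfl, haS, hbS⟩ := hfK
          have hav : a ≠ v := fun h => hvf (h ▸ Sym2.mem_mk_left a b)
          have hbv : b ≠ v := fun h => hvf (h ▸ Sym2.mem_mk_right a b)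
          exact ⟨s(a, b), ⟨(hKE _ ⟨hfE, a, b, rfl, haS, hbS⟩).1, a, b, rfl,
            (hmemT a hav).2 haS, fun h => hbS ((hmemT b hbv).1 h)⟩, hcf⟩
      calc C.ncard + 1 = (insert i C).ncard :=
            (Set.ncard_insert_of_notMem hiC (Set.toFinite _)).symm
        _ ≤ _ := Set.ncard_le_ncard hsub (Set.toFinite _)
    · -- counting: contradiction with hi
      exfalso
      push_neg at hgood
      -- every vertex incident to an i-colored edge has a fragile color
      have hbad : ∀ v, (∃ u, G.Adj u v ∧ c s(u, v) = i) →
          ∃ j ∈ C, ∀ f ∈ K, c f = j → v ∈ f := by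
        intro v hv
        exact hgood v hv
      -- uniqueness of fragile vertices per color and side
      have huniq : ∀ j ∈ C, ∀ u u', (∀ f ∈ K, c f = j → u ∈ f) →
          (∀ f ∈ K, c f = j → u' ∈ f) → (u ∈ S ↔ u' ∈ S) → u = u' := by
        rintro j ⟨f, hfK, rfl⟩ u u' hu hu' hside
        have hu1 := hu f hfK rfl
        have hu2 := hu' f hfK rfl
        obtain ⟨hfE, a, b, rfl, haS, hbS⟩ := hfK
        rcases Sym2.mem_iff.1 hu1 with rfl | rfl <;> rcases Sym2.mem_iff.1 hu2 with rfl | rfl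
        · rfl
        · exact absurd (hside.1 haS) hbS
        · exact absurd (hside.2 haS) hbS
        · rfl
      -- choose a fragile color for each vertex
      have hJex : ∀ v : V, ∃ j : Fin p, (∃ u, G.Adj u v ∧ c s(u, v) = i) →
          j ∈ C ∧ ∀ f ∈ K, c f = j → v ∈ f := by
        intro v
        by_cases h : ∃ u, G.Adj u v ∧ c s(u, v) = i
        · obtain ⟨j, hjC, hjfr⟩ := hbad v h
          exact ⟨j, fun _ => ⟨hjC, hjfr⟩⟩
        · exact ⟨i, fun h' => absurd h' h⟩
      choose J hJ using hJex
      have hJu : ∀ u v, G.Adj u v → c s(u, v) = i →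
          J u ∈ C ∧ ∀ f ∈ K, c f = J u → u ∈ f := by
        intro u v hadj hci
        exact hJ u ⟨v, hadj.symm, by rwa [Sym2.eq_swap]⟩
      have hJne : ∀ u v, G.Adj u v → c s(u, v) = i → J u ≠ J v := by
        intro u v hadj hci heq
        have h1 := hJu u v hadj hci
        have h2 := hJu v u hadj.symm (by rwa [Sym2.eq_swap])
        exact hadj.ne (huniq (J u) h1.1 u v h1.2 (heq ▸ h2.2) (hsame u v hadj hci))
      -- the injection
      set φ : Sym2 V → Sym2 (Fin p) × Prop :=
        fun e => (e.map J, ∀ x ∈ e, x ∈ S) with hφ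
      set Ei := {e ∈ G.edgeSet | c e = i} with hEi
      have hforall : ∀ u v : V, G.Adj u v → c s(u, v) = i →
          ((∀ x ∈ s(u, v), x ∈ S) ↔ u ∈ S) := by
        intro u v hadj hci
        constructor
        · exact fun h => h u (Sym2.mem_mk_left u v)
        · intro hu x hx
          rcases Sym2.mem_iff.1 hx with rfl | rfl
          · exact hu
          · exact (hsame _ _ hadj hci).1 hu
      have hinj : Set.InjOn φ Ei := by
        intro e he e' he' heq
        revert he he' heq
        refine Sym2.inductionOn₂ e e' ?_
        rintro u v u' v' ⟨heE, hci⟩ ⟨heE', hci'⟩ heq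
        have hadj : G.Adj u v := G.mem_edgeSet.1 heE
        have hadj' : G.Adj u' v' := G.mem_edgeSet.1 heE'
        have heq1 : s(J u, J v) = s(J u', J v') := by
          have := congrArg Prod.fst heq
          simpa [hφ, Sym2.map_pair_eq] using this
        have heq2 : (∀ x ∈ s(u, v), x ∈ S) ↔ (∀ x ∈ s(u', v'), x ∈ S) :=
          iff_of_eq (congrArg Prod.snd heq)
        have hside : u ∈ S ↔ u' ∈ S := by
          rw [← hforall u v hadj hci, ← hforall u' v' hadj' hci']
          exact heq2
        have hsuv : u ∈ S ↔ v ∈ S := hsame u v hadj hci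
        have hsuv' : u' ∈ S ↔ v' ∈ S := hsame u' v' hadj' hci'
        have hJufr := hJu u v hadj hci
        have hJvfr := hJu v u hadj.symm (by rwa [Sym2.eq_swap])
        have hJufr' := hJu u' v' hadj' hci'
        have hJvfr' := hJu v' u' hadj'.symm (by rwa [Sym2.eq_swap])
        rcases Sym2.eq_iff.1 heq1 with ⟨h1, h2⟩ | ⟨h1, h2⟩
        · have hu : u = u' := huniq (J u) hJufr.1 u u' hJufr.2 (h1 ▸ hJufr'.2) hside
          have hv : v = v' := huniq (J v) hJvfr.1 v v' hJvfr.2 (h2 ▸ hJvfr'.2)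
            (hsuv.symm.trans (hside.trans hsuv'))
          rw [hu, hv]
        · have hu : u = v' := huniq (J u) hJufr.1 u v' hJufr.2 (h1 ▸ hJvfr'.2)
            (hside.trans hsuv')
          have hv : v = u' := huniq (J v) hJvfr.1 v u' hJvfr.2 (h2 ▸ hJufr'.2)
            (hsuv.symm.trans hside)
          rw [hu, hv, Sym2.eq_swap]
      set T0 := {x : Sym2 (Fin p) × Prop | ¬ x.1.IsDiag} with hT0
      have himg : φ '' Ei ⊆ T0 := by
        rintro x ⟨e, he, rfl⟩
        revert he
        refine Sym2.ind ?_ e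
        rintro u v ⟨heE, hci⟩
        have hadj : G.Adj u v := G.mem_edgeSet.1 heE
        simp only [hT0, hφ, Set.mem_setOf_eq, Sym2.map_pair_eq, Sym2.mk_isDiag_iff]
        exact hJne u v hadj hci
      have h1 : Ei.ncard = (φ '' Ei).ncard := (Set.ncard_image_of_injOn hinj).symm
      have h2 : (φ '' Ei).ncard ≤ T0.ncard := Set.ncard_le_ncard himg (Set.toFinite _)
      have h3 : T0.ncard = Nat.choose p 2 * 2 := by
        have e1 : T0 ≃ {q : Sym2 (Fin p) // ¬ q.IsDiag} × Prop :=
          { toFun := fun x => (⟨x.1.1, x.2⟩, x.1.2)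
            invFun := fun y => ⟨(y.1.1, y.2), y.1.2⟩
            left_inv := fun x => rfl
            right_inv := fun y => rfl }
        have : T0.ncard = Nat.card T0 := rfl
        rw [this, Nat.card_congr e1, Nat.card_eq_fintype_card, Fintype.card_prod,
          Sym2.card_subtype_not_diag, Fintype.card_prop, Fintype.card_fin]
      omega

/-- Correctness of the reduction rule: if color class `i` has more than `2 * (p choose 2)`
edges, then the maximum number of colors in a cut of `G` equals one plus the maximum
number of colors in a cut of `G` with the edges of color `i` deleted. -/
theorem stmt9 {V : Type*} [Fintype V] (hV : 2 ≤ Fintype.card V)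
    (G : SimpleGraph V) (p : ℕ) (c : Sym2 V → Fin p)
    (hsurj : ∀ j : Fin p, ∃ e ∈ G.edgeSet, c e = j)
    (i : Fin p) (hi : 2 * Nat.choose p 2 < {e ∈ G.edgeSet | c e = i}.ncard) :
    sSup {n : ℕ | ∃ S : Set V, S.Nonempty ∧ S ≠ Set.univ ∧
        n = (c '' cutEdges G S).ncard} =
      sSup {n : ℕ | ∃ S : Set V, S.Nonempty ∧ S ≠ Set.univ ∧
        n = (c '' cutEdges (G.deleteEdges {e | c e = i}) S).ncard} + 1 := by
  classical
  set A := {n : ℕ | ∃ S : Set V, S.Nonempty ∧ S ≠ Set.univ ∧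
      n = (c '' cutEdges G S).ncard} with hA
  set B := {n : ℕ | ∃ S : Set V, S.Nonempty ∧ S ≠ Set.univ ∧
      n = (c '' cutEdges (G.deleteEdges {e | c e = i}) S).ncard} with hB
  have hboundA : ∀ n ∈ A, n ≤ p := by
    rintro n ⟨S, -, -, rfl⟩
    calc (c '' cutEdges G S).ncard ≤ (Set.univ : Set (Fin p)).ncard :=
          Set.ncard_le_ncard (Set.subset_univ _) (Set.toFinite _)
      _ = p := by rw [Set.ncard_univ, Nat.card_eq_fintype_card, Fintype.card_fin]
  have hboundB : ∀ n ∈ B, n ≤ p := by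
    rintro n ⟨S, -, -, rfl⟩
    calc (c '' cutEdges _ S).ncard ≤ (Set.univ : Set (Fin p)).ncard :=
          Set.ncard_le_ncard (Set.subset_univ _) (Set.toFinite _)
      _ = p := by rw [Set.ncard_univ, Nat.card_eq_fintype_card, Fintype.card_fin]
  have bddA : BddAbove A := ⟨p, hboundA⟩
  have bddB : BddAbove B := ⟨p, hboundB⟩
  obtain ⟨v, w, hvw⟩ := Fintype.exists_pair_of_one_lt_card (α := V) (by omega)
  have hSv : ({v} : Set V) ≠ Set.univ := by
    intro h
    have hw : w ∈ ({v} : Set V) := h ▸ Set.mem_univ w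
    exact hvw (Set.mem_singleton_iff.1 hw).symm
  have neA : A.Nonempty := ⟨_, ⟨{v}, Set.singleton_nonempty v, hSv, rfl⟩⟩
  have neB : B.Nonempty := ⟨_, ⟨{v}, Set.singleton_nonempty v, hSv, rfl⟩⟩
  apply le_antisymm
  · refine csSup_le neA ?_
    rintro n ⟨T, hT1, hT2, rfl⟩
    have h1 := cut_upper G c i T
    have h2 : (c '' cutEdges (G.deleteEdges {e | c e = i}) T).ncard ≤ sSup B :=
      le_csSup bddB ⟨T, hT1, hT2, rfl⟩
    omega
  · obtain ⟨S, hS1, hS2, hmeq⟩ := Nat.sSup_mem neB bddB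
    obtain ⟨T, hT1, hT2, hle⟩ := cut_main G c i hi S hS1 hS2
    have hmem : (c '' cutEdges G T).ncard ∈ A := ⟨T, hT1, hT2, rfl⟩
    have := le_csSup bddA hmem
    omega
end

section
/- Subdivision preserves colorful cuts: let G be a graph with edge coloring c using colors {1,...,p}, and let H be obtained from G by replacing one edge {v,w} of color i by a path v–x–y–w (with x,y new vertices), where edge {x,y} gets color i and edges {v,x}, {y,w} get two distinct new colors p+1, p+2. Then H has a colorful cut (using all p+2 colors) if and only if G has a colorful cut (using all p colors). -/
set_option maxHeartbeats 1000000

open Set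

lemma sym2_cases {α : Type*} (e : Sym2 α) : ∃ a b, e = s(a, b) :=
  e.inductionOn fun a b => ⟨a, b, rfl⟩

lemma cut_pair {V : Type*} (G : SimpleGraph V) (S : Set V) (a b : V) :
    s(a, b) ∈ cutEdges G S ↔
      s(a, b) ∈ G.edgeSet ∧ ((a ∈ S ∧ b ∉ S) ∨ (b ∈ S ∧ a ∉ S)) := by
  constructor
  · rintro ⟨he, u, x, hux, hu, hx⟩
    refine ⟨he, ?_⟩
    rw [Sym2.eq_iff] at hux
    rcases hux with ⟨rfl, rfl⟩ | ⟨rfl, rfl⟩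
    · exact Or.inl ⟨hu, hx⟩
    · exact Or.inr ⟨hu, hx⟩
  · rintro ⟨he, (⟨ha, hb⟩ | ⟨hb, ha⟩)⟩
    · exact ⟨he, a, b, rfl, ha, hb⟩
    · exact ⟨he, b, a, Sym2.eq_swap, hb, ha⟩

/-- Subdivision preserves colorful cuts: replacing an edge `{v,w}` of color `i` by a path
`v–x–y–w`, where `{x,y}` keeps color `i` and `{v,x}`, `{y,w}` get two distinct new
colors `p+1, p+2`, preserves the existence of a colorful cut. -/
theorem stmt11 {V : Type*} [Fintype V] (G : SimpleGraph V) (p : ℕ)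
    (c : Sym2 V → ℕ) (hrange : ∀ e ∈ G.edgeSet, c e ∈ Finset.Icc 1 p)
    (hsurj : ∀ j ∈ Finset.Icc 1 p, ∃ e ∈ G.edgeSet, c e = j)
    (v w : V) (hvw : G.Adj v w)
    (H : SimpleGraph (V ⊕ Fin 2))
    (hH : H = SimpleGraph.fromEdgeSet
      ((Sym2.map Sum.inl '' (G.edgeSet \ {s(v, w)})) ∪
        {s(Sum.inl v, Sum.inr 0), s(Sum.inr 0, Sum.inr 1), s(Sum.inr 1, Sum.inl w)}))
    (c' : Sym2 (V ⊕ Fin 2) → ℕ)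
    (hold : ∀ e ∈ G.edgeSet \ {s(v, w)}, c' (Sym2.map Sum.inl e) = c e)
    (hmid : c' s(Sum.inr 0, Sum.inr 1) = c s(v, w))
    (hnew1 : c' s(Sum.inl v, Sum.inr 0) = p + 1)
    (hnew2 : c' s(Sum.inr 1, Sum.inl w) = p + 2) :
    (∃ S : Set (V ⊕ Fin 2), S.Nonempty ∧ S ≠ Set.univ ∧
        ∀ j ∈ Finset.Icc 1 (p + 2), ∃ e ∈ cutEdges H S, c' e = j) ↔
      (∃ S : Set V, S.Nonempty ∧ S ≠ Set.univ ∧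
        ∀ j ∈ Finset.Icc 1 p, ∃ e ∈ cutEdges G S, c e = j) := by
  classical
  have hvwE : s(v, w) ∈ G.edgeSet := G.mem_edgeSet.mpr hvw
  have hiIcc := Finset.mem_Icc.mp (hrange _ hvwE)
  have hEdge : H.edgeSet = (Sym2.map Sum.inl '' (G.edgeSet \ {s(v, w)})) ∪
      {s(Sum.inl v, Sum.inr 0), s(Sum.inr 0, Sum.inr 1), s(Sum.inr 1, Sum.inl w)} := by
    rw [hH, SimpleGraph.edgeSet_fromEdgeSet]
    rw [sdiff_eq_left, Set.disjoint_left]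
    rintro e (⟨e', ⟨he', -⟩, rfl⟩ | he) hd
    · exact (G.not_isDiag_of_mem_edgeSet he')
        ((Sym2.isDiag_map Sum.inl_injective).mp hd)
    · simp only [Set.mem_insert_iff, Set.mem_singleton_iff] at he
      rcases he with rfl | rfl | rfl <;> simp at hd
  have hvxE : s(Sum.inl v, Sum.inr (0 : Fin 2)) ∈ H.edgeSet := by
    rw [hEdge]; exact Or.inr (by simp)
  have hmidE : s(Sum.inr (0 : Fin 2), Sum.inr (1 : Fin 2)) ∈ H.edgeSet := by
    rw [hEdge]; exact Or.inr (by simp)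
  have hywE : s(Sum.inr (1 : Fin 2), Sum.inl w) ∈ H.edgeSet := by
    rw [hEdge]; exact Or.inr (by simp)
  have himgE : ∀ e' ∈ G.edgeSet \ {s(v, w)}, Sym2.map Sum.inl e' ∈ H.edgeSet := by
    intro e' h; rw [hEdge]; exact Or.inl ⟨e', h, rfl⟩
  have honly1 : ∀ e ∈ H.edgeSet, c' e = p + 1 → e = s(Sum.inl v, Sum.inr 0) := by
    intro e heH hce
    rw [hEdge] at heH
    rcases heH with ⟨e', he', rfl⟩ | he
    · rw [hold e' he'] at hce
      have := Finset.mem_Icc.mp (hrange e' he'.1); omega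
    · simp only [Set.mem_insert_iff, Set.mem_singleton_iff] at he
      rcases he with rfl | rfl | rfl
      · rfl
      · rw [hmid] at hce; omega
      · rw [hnew2] at hce; omega
  have honly2 : ∀ e ∈ H.edgeSet, c' e = p + 2 → e = s(Sum.inr 1, Sum.inl w) := by
    intro e heH hce
    rw [hEdge] at heH
    rcases heH with ⟨e', he', rfl⟩ | he
    · rw [hold e' he'] at hce
      have := Finset.mem_Icc.mp (hrange e' he'.1); omega
    · simp only [Set.mem_insert_iff, Set.mem_singleton_iff] at he
      rcases he with rfl | rfl | rfl
      · rw [hnew1] at hce; omega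
      · rw [hmid] at hce; omega
      · rfl
  constructor
  · rintro ⟨S', hne, hproper, hcol⟩
    -- the new edges v-x and y-w must be in the cut
    obtain ⟨e1, he1cut, he1c⟩ := hcol (p + 1) (Finset.mem_Icc.mpr ⟨by omega, by omega⟩)
    have he1 := honly1 e1 he1cut.1 he1c
    subst he1
    rw [cut_pair] at he1cut
    have d1 := he1cut.2
    obtain ⟨e2, he2cut, he2c⟩ := hcol (p + 2) (Finset.mem_Icc.mpr ⟨by omega, by omega⟩)
    have he2 := honly2 e2 he2cut.1 he2c
    subst he2
    rw [cut_pair] at he2cut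
    have d2 := he2cut.2
    refine ⟨Sum.inl ⁻¹' S', ?_, ?_, ?_⟩
    · -- nonempty
      by_contra h
      rw [Set.not_nonempty_iff_eq_empty, Set.eq_empty_iff_forall_notMem] at h
      have hx0 : Sum.inr (0 : Fin 2) ∈ S' := by
        rcases d1 with ⟨hv', -⟩ | ⟨h', -⟩
        · exact absurd hv' (h v)
        · exact h'
      have hy1 : Sum.inr (1 : Fin 2) ∈ S' := by
        rcases d2 with ⟨h', -⟩ | ⟨hw', -⟩
        · exact h'
        · exact absurd hw' (h w)
      obtain ⟨e, hecut, hec⟩ := hcol (c s(v, w))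
        (Finset.mem_Icc.mpr ⟨hiIcc.1, by omega⟩)
      have heH := hecut.1
      rw [hEdge] at heH
      rcases heH with ⟨e', he', rfl⟩ | he
      · obtain ⟨a, b, rfl⟩ := sym2_cases e'
        obtain ⟨-, u, t, hut, hu, -⟩ := hecut
        rw [Sym2.map_pair_eq, Sym2.eq_iff] at hut
        rcases hut with ⟨h1, -⟩ | ⟨-, h1⟩
        · rw [← h1] at hu; exact h a hu
        · rw [← h1] at hu; exact h b hu
      · simp only [Set.mem_insert_iff, Set.mem_singleton_iff] at he
        rcases he with rfl | rfl | rfl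
        · rw [hnew1] at hec; omega
        · rw [cut_pair] at hecut; tauto
        · rw [hnew2] at hec; omega
    · -- not univ
      intro hU
      have hall : ∀ u, Sum.inl u ∈ S' := by
        intro u
        have : u ∈ Sum.inl ⁻¹' S' := hU.symm ▸ Set.mem_univ u
        exact this
      have hx0 : Sum.inr (0 : Fin 2) ∉ S' := by
        rcases d1 with ⟨-, h'⟩ | ⟨-, hv'⟩
        · exact h'
        · exact absurd (hall v) hv'
      have hy1 : Sum.inr (1 : Fin 2) ∉ S' := by
        rcases d2 with ⟨-, hw'⟩ | ⟨-, h'⟩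
        · exact absurd (hall w) hw'
        · exact h'
      obtain ⟨e, hecut, hec⟩ := hcol (c s(v, w))
        (Finset.mem_Icc.mpr ⟨hiIcc.1, by omega⟩)
      have heH := hecut.1
      rw [hEdge] at heH
      rcases heH with ⟨e', he', rfl⟩ | he
      · obtain ⟨a, b, rfl⟩ := sym2_cases e'
        obtain ⟨-, u, t, hut, -, ht⟩ := hecut
        rw [Sym2.map_pair_eq, Sym2.eq_iff] at hut
        rcases hut with ⟨-, h1⟩ | ⟨h1, -⟩
        · rw [← h1] at ht; exact ht (hall b)
        · rw [← h1] at ht; exact ht (hall a)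
      · simp only [Set.mem_insert_iff, Set.mem_singleton_iff] at he
        rcases he with rfl | rfl | rfl
        · rw [hnew1] at hec; omega
        · rw [cut_pair] at hecut; tauto
        · rw [hnew2] at hec; omega
    · -- coverage
      intro j hj
      rw [Finset.mem_Icc] at hj
      obtain ⟨e, hecut, hec⟩ := hcol j (Finset.mem_Icc.mpr ⟨hj.1, by omega⟩)
      have heH := hecut.1
      rw [hEdge] at heH
      rcases heH with ⟨e', he', rfl⟩ | he
      · obtain ⟨a, b, rfl⟩ := sym2_cases e'
        have hc : c s(a, b) = j := by rw [← hold _ he']; exact hec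
        rw [Sym2.map_pair_eq, cut_pair] at hecut
        refine ⟨s(a, b), (cut_pair G _ a b).mpr ⟨he'.1, ?_⟩, hc⟩
        simpa only [Set.mem_preimage] using hecut.2
      · simp only [Set.mem_insert_iff, Set.mem_singleton_iff] at he
        rcases he with rfl | rfl | rfl
        · rw [hnew1] at hec; omega
        · rw [cut_pair] at hecut
          have dmid := hecut.2
          refine ⟨s(v, w), (cut_pair G _ v w).mpr ⟨hvwE, ?_⟩, by rw [← hmid]; exact hec⟩
          simp only [Set.mem_preimage]
          tauto
        · rw [hnew2] at hec; omega
  · rintro ⟨S, ⟨u0, hu0⟩, hSproper, hScol⟩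
    let S' : Set (V ⊕ Fin 2) :=
      Sum.elim (· ∈ S) (fun t => (t = 0 ∧ v ∉ S) ∨ (t = 1 ∧ w ∉ S))
    have hinl : ∀ u : V, Sum.inl u ∈ S' ↔ u ∈ S := fun u => Iff.rfl
    have h0 : Sum.inr (0 : Fin 2) ∈ S' ↔ v ∉ S := by
      constructor
      · rintro (⟨-, h⟩ | ⟨h, -⟩)
        · exact h
        · exact absurd h (by decide)
      · exact fun h => Or.inl ⟨rfl, h⟩
    have h1 : Sum.inr (1 : Fin 2) ∈ S' ↔ w ∉ S := by
      constructor
      · rintro (⟨h, -⟩ | ⟨-, h⟩)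
        · exact absurd h (by decide)
        · exact h
      · exact fun h => Or.inr ⟨rfl, h⟩
    refine ⟨S', ⟨Sum.inl u0, (hinl u0).mpr hu0⟩, ?_, ?_⟩
    · obtain ⟨u1, hu1⟩ := (Set.ne_univ_iff_exists_notMem S).mp hSproper
      intro hU
      exact hu1 ((hinl u1).mp (hU.symm ▸ Set.mem_univ _))
    · intro j hj
      rw [Finset.mem_Icc] at hj
      by_cases hjp : j ≤ p
      · obtain ⟨e, hecut, hec⟩ := hScol j (Finset.mem_Icc.mpr ⟨hj.1, hjp⟩)
        obtain ⟨a, b, rfl⟩ := sym2_cases e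
        rw [cut_pair] at hecut
        obtain ⟨heG, hcutab⟩ := hecut
        by_cases hevw : s(a, b) = s(v, w)
        · have hcvw : c s(v, w) = j := by rw [← hevw]; exact hec
          have dvw : (v ∈ S ∧ w ∉ S) ∨ (w ∈ S ∧ v ∉ S) := by
            rcases Sym2.eq_iff.mp hevw with ⟨rfl, rfl⟩ | ⟨rfl, rfl⟩ <;> tauto
          refine ⟨s(Sum.inr 0, Sum.inr 1),
            (cut_pair H _ _ _).mpr ⟨hmidE, ?_⟩, by rw [hmid]; exact hcvw⟩
          rw [h0, h1]
          tauto
        · refine ⟨Sym2.map Sum.inl s(a, b), ?_, by rw [hold _ ⟨heG, hevw⟩]; exact hec⟩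
          rw [Sym2.map_pair_eq, cut_pair]
          refine ⟨by rw [← Sym2.map_pair_eq]; exact himgE _ ⟨heG, hevw⟩, ?_⟩
          exact hcutab
      · by_cases hj1 : j = p + 1
        · subst hj1
          refine ⟨s(Sum.inl v, Sum.inr 0), (cut_pair H _ _ _).mpr ⟨hvxE, ?_⟩, hnew1⟩
          by_cases hv : v ∈ S
          · exact Or.inl ⟨hv, fun h => (h0.mp h) hv⟩
          · exact Or.inr ⟨h0.mpr hv, hv⟩
        · have hj2 : j = p + 2 := by omega
          subst hj2
          refine ⟨s(Sum.inr 1, Sum.inl w), (cut_pair H _ _ _).mpr ⟨hywE, ?_⟩, hnew2⟩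
          by_cases hw : w ∈ S
          · exact Or.inr ⟨hw, fun h => (h1.mp h) hw⟩
          · exact Or.inl ⟨h1.mpr hw, hw⟩
end

section
/- Every graph (with at least one edge) whose edges are colored with p colors such that k ≤ p/2 has a nontrivial cut using at least k colors. Consequently, every instance of Maximum Colored Cut with k ≤ p/2 is a Yes-instance. -/
open Set

open Classical in
/-- For `u ≠ v`, exactly half of all subsets separate `u` from `v`. -/
lemma cut_count {V : Type*} [Fintype V] {u v : V} (huv : u ≠ v) :
    2 * (Finset.univ.filter (fun S : Finset V =>
      (u ∈ S ∧ v ∉ S) ∨ (v ∈ S ∧ u ∉ S))).card = 2 ^ Fintype.card V := by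
  classical
  set cond : Finset V → Prop := fun S => (u ∈ S ∧ v ∉ S) ∨ (v ∈ S ∧ u ∉ S) with hcond
  set σ : Finset V → Finset V := fun S => if u ∈ S then S.erase u else insert u S with hσ
  have hu : ∀ S, u ∈ σ S ↔ u ∉ S := by
    intro S; by_cases h : u ∈ S <;> simp [hσ, h]
  have hv : ∀ S, v ∈ σ S ↔ v ∈ S := by
    intro S; by_cases h : u ∈ S <;> simp [hσ, h, Ne.symm huv, huv]
  have hσσ : ∀ S, σ (σ S) = S := by
    intro S; by_cases h : u ∈ S <;>
      simp [hσ, h, Finset.insert_erase, Finset.erase_insert]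
  have hcc : ∀ S, cond (σ S) ↔ ¬ cond S := by
    intro S
    have h1 := hu S
    have h2 := hv S
    simp only [hcond]
    tauto
  have hcard : (Finset.univ.filter fun S => cond S).card
      = (Finset.univ.filter fun S => ¬ cond S).card := by
    apply Finset.card_bij' (fun S _ => σ S) (fun S _ => σ S)
    · intro a ha
      simp only [Finset.mem_filter, Finset.mem_univ, true_and] at ha ⊢
      rw [hcc a]
      exact not_not_intro ha
    · intro a ha
      simp only [Finset.mem_filter, Finset.mem_univ, true_and] at ha ⊢
      exact (hcc a).mpr ha
    · intro a _; exact hσσ a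
    · intro a _; exact hσσ a
  have htot : (Finset.univ.filter fun S => cond S).card
      + (Finset.univ.filter fun S => ¬ cond S).card = 2 ^ Fintype.card V := by
    rw [Finset.card_filter_add_card_filter_not]
    simp [Fintype.card_finset]
  have hgoal : (Finset.univ.filter (fun S : Finset V =>
      (u ∈ S ∧ v ∉ S) ∨ (v ∈ S ∧ u ∉ S))) = Finset.univ.filter (fun S => cond S) := rfl
  rw [hgoal]
  omega

/-- If `k ≤ p/2`, every graph edge-colored surjectively with `p` colors has a nontrivial
cut using at least `k` colors: every such instance of Maximum Colored Cut is a
Yes-instance. -/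
theorem stmt13 {V : Type*} [Fintype V] (hV : 2 ≤ Fintype.card V)
    (G : SimpleGraph V) (p : ℕ) (c : Sym2 V → Fin p)
    (hsurj : ∀ i : Fin p, ∃ e ∈ G.edgeSet, c e = i)
    (k : ℕ) (hk : 0 < k) (hkp : 2 * k ≤ p) :
    ∃ S : Set V, S.Nonempty ∧ S ≠ Set.univ ∧ k ≤ (c '' cutEdges G S).ncard := by
  classical
  choose f hfE hfc using hsurj
  set n := Fintype.card V with hn
  -- each representative edge is cut by exactly half of all subsets
  have key : ∀ i : Fin p,
      2 * (Finset.univ.filter (fun S : Finset V => f i ∈ cutEdges G ↑S)).card = 2 ^ n := by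
    intro i
    obtain ⟨⟨u, v⟩, he⟩ := Quot.exists_rep (f i)
    have he' : f i = s(u, v) := he.symm
    have hadj : G.Adj u v := by
      have := hfE i
      rwa [he', SimpleGraph.mem_edgeSet] at this
    have huv : u ≠ v := G.ne_of_adj hadj
    have hiff : ∀ S : Finset V, (f i ∈ cutEdges G ↑S) ↔
        ((u ∈ S ∧ v ∉ S) ∨ (v ∈ S ∧ u ∉ S)) := by
      intro S
      constructor
      · rintro ⟨-, a, b, hab, ha, hb⟩
        rw [he', Sym2.eq_iff] at hab
        rcases hab with ⟨rfl, rfl⟩ | ⟨rfl, rfl⟩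
        · exact Or.inl ⟨ha, hb⟩
        · exact Or.inr ⟨ha, hb⟩
      · rintro (⟨h1, h2⟩ | ⟨h1, h2⟩)
        · exact ⟨hfE i, u, v, he', by simpa using h1, by simpa using h2⟩
        · exact ⟨hfE i, v, u, by rw [he', Sym2.eq_swap], by simpa using h1,
            by simpa using h2⟩
      -- rewrite the filter condition
    have : (Finset.univ.filter (fun S : Finset V => f i ∈ cutEdges G ↑S))
        = (Finset.univ.filter (fun S : Finset V =>
            (u ∈ S ∧ v ∉ S) ∨ (v ∈ S ∧ u ∉ S))) := by
      apply Finset.filter_congr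
      intro S _
      simp [hiff S]
    rw [this]
    exact cut_count huv
  -- double counting
  set N : Finset V → ℕ :=
    fun S => (Finset.univ.filter (fun i : Fin p => f i ∈ cutEdges G ↑S)).card with hN
  have hsum : 2 * ∑ S : Finset V, N S = p * 2 ^ n := by
    have h1 : ∑ S : Finset V, N S
        = ∑ i : Fin p, (Finset.univ.filter (fun S : Finset V => f i ∈ cutEdges G ↑S)).card := by
      simp only [hN, Finset.card_filter]
      exact Finset.sum_comm
    rw [h1, Finset.mul_sum]
    rw [Finset.sum_congr rfl (fun i _ => key i)]
    simp [mul_comm]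
  -- find a good S
  obtain ⟨S, hS⟩ : ∃ S : Finset V, k ≤ N S := by
    by_contra h
    push_neg at h
    have hle : ∑ S : Finset V, N S ≤ ∑ _S : Finset V, (k - 1) :=
      Finset.sum_le_sum (fun S _ => by have := h S; omega)
    have hconst : ∑ _S : Finset V, (k - 1) = 2 ^ n * (k - 1) := by
      simp [Fintype.card_finset, ← hn]
    rw [hconst] at hle
    have hM : 0 < 2 ^ n := by positivity
    have h2 : p * 2 ^ n ≤ 2 * (2 ^ n * (k - 1)) := by omega
    have h3 : 2 * k * 2 ^ n ≤ p * 2 ^ n :=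
      Nat.mul_le_mul_right _ hkp
    have h4 : 2 ^ n * (2 * k) ≤ 2 ^ n * (2 * (k - 1)) := by
      calc 2 ^ n * (2 * k) = 2 * k * 2 ^ n := by ring
        _ ≤ p * 2 ^ n := h3
        _ ≤ 2 * (2 ^ n * (k - 1)) := h2
        _ = 2 ^ n * (2 * (k - 1)) := by ring
    have h5 := Nat.le_of_mul_le_mul_left h4 hM
    omega
  -- extract witnesses
  have hpos : 0 < N S := lt_of_lt_of_le hk hS
  obtain ⟨i, hi⟩ := Finset.card_pos.mp hpos
  have hicut : f i ∈ cutEdges G ↑S := (Finset.mem_filter.mp hi).2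
  obtain ⟨-, u, v, -, hu, hv⟩ := hicut
  refine ⟨↑S, ⟨u, hu⟩, ?_, ?_⟩
  · intro h
    exact hv (h ▸ Set.mem_univ v)
  · calc k ≤ N S := hS
      _ = ((Finset.univ.filter (fun i : Fin p => f i ∈ cutEdges G ↑S) : Finset (Fin p))
          : Set (Fin p)).ncard := (Set.ncard_coe_finset _).symm
      _ ≤ (c '' cutEdges G ↑S).ncard := by
          apply Set.ncard_le_ncard
          · intro j hj
            simp only [Finset.coe_filter, Set.mem_setOf_eq, Finset.mem_univ, true_and] at hj
            exact ⟨f j, hj, hfc j⟩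
          · exact Set.toFinite _
end

section
/- Adding isolated-modification via vertex identification preserves colorful cuts: let G be an edge-colored graph with connected components G₁, ..., G_m, pick a vertex v_j in each G_j, and form G* by identifying v₁, ..., v_m into a single vertex v (no parallel edges arise since components are disjoint). Then G* has a colorful cut if and only if G has a colorful cut. -/
open Set

lemma mem_cutEdges_iff {V : Type*} (G : SimpleGraph V) (S : Set V) {u v : V}
    (h : G.Adj u v) : s(u, v) ∈ cutEdges G S ↔ ((u ∈ S ∧ v ∉ S) ∨ (v ∈ S ∧ u ∉ S)) := by
  constructor
  · rintro ⟨-, a, b, hab, ha, hb⟩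
    rw [Sym2.eq_iff] at hab
    rcases hab with ⟨rfl, rfl⟩ | ⟨rfl, rfl⟩
    · exact Or.inl ⟨ha, hb⟩
    · exact Or.inr ⟨ha, hb⟩
  · rintro (⟨ha, hb⟩ | ⟨ha, hb⟩)
    · exact ⟨G.mem_edgeSet.mpr h, u, v, rfl, ha, hb⟩
    · exact ⟨G.mem_edgeSet.mpr h, v, u, Sym2.eq_swap, ha, hb⟩

/-- Identifying one chosen vertex of each connected component of `G` into a single vertex
preserves the existence of a colorful cut. -/
theorem stmt16 {V V' : Type*} [Fintype V] [Fintype V']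
    (G : SimpleGraph V) (p : ℕ) (hp : 0 < p) (c : Sym2 V → Fin p)
    (hsurj : ∀ i : Fin p, ∃ e ∈ G.edgeSet, c e = i)
    (q : V → V') (hq : Function.Surjective q) (v0 : V')
    (hident : ∀ x y : V, q x = q y ↔ (x = y ∨ (q x = v0 ∧ q y = v0)))
    (hchoice : ∀ x : V, ∃! y : V, q y = v0 ∧ G.Reachable x y)
    (Gq : SimpleGraph V')
    (hGq : ∀ a b : V', Gq.Adj a b ↔ a ≠ b ∧ ∃ x y : V, G.Adj x y ∧ q x = a ∧ q y = b)
    (c' : Sym2 V' → Fin p)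
    (hc' : ∀ x y : V, G.Adj x y → c' s(q x, q y) = c s(x, y)) :
    (∃ T : Set V', T.Nonempty ∧ T ≠ Set.univ ∧ c' '' cutEdges Gq T = Set.univ) ↔
      (∃ S : Set V, S.Nonempty ∧ S ≠ Set.univ ∧ c '' cutEdges G S = Set.univ) := by
  constructor
  · rintro ⟨T, hTne, hTnu, hTcut⟩
    -- WLOG `v0 ∉ T`
    obtain ⟨T, hTne, hTnu, hTcut, hv0⟩ :
        ∃ T : Set V', T.Nonempty ∧ T ≠ Set.univ ∧ c' '' cutEdges Gq T = Set.univ ∧ v0 ∉ T := by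
      by_cases h : v0 ∈ T
      · refine ⟨Tᶜ, Set.nonempty_compl.mpr hTnu, ?_, by rw [cutEdges_compl]; exact hTcut,
          by simpa using h⟩
        intro heq
        have : v0 ∈ Tᶜ := heq ▸ Set.mem_univ v0
        exact this h
      · exact ⟨T, hTne, hTnu, hTcut, h⟩
    refine ⟨q ⁻¹' T, ?_, ?_, ?_⟩
    · obtain ⟨a, ha⟩ := hTne
      obtain ⟨x, rfl⟩ := hq a
      exact ⟨x, ha⟩
    · obtain ⟨z, hz⟩ := hq v0
      intro heq
      have : z ∈ q ⁻¹' T := heq ▸ Set.mem_univ z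
      rw [Set.mem_preimage, hz] at this
      exact hv0 this
    · rw [Set.eq_univ_iff_forall]
      intro i
      obtain ⟨e', he', hce⟩ := (Set.eq_univ_iff_forall.mp hTcut) i
      obtain ⟨hEdge, a, b, rfl, ha, hb⟩ := he'
      rw [SimpleGraph.mem_edgeSet, hGq] at hEdge
      obtain ⟨hne, x, y, hxy, rfl, rfl⟩ := hEdge
      rw [hc' x y hxy] at hce
      exact ⟨s(x, y), ⟨G.mem_edgeSet.mpr hxy, x, y, rfl, ha, hb⟩, hce⟩
  · rintro ⟨S, hSne, hSnu, hScut⟩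
    -- the "chosen vertex" of the component of each vertex
    choose ch hch1 hch2 using hchoice
    have hfix : ∀ y : V, q y = v0 → ch y = y := fun y hy =>
      (hch2 y y ⟨hy, SimpleGraph.Reachable.refl y⟩).symm
    have hadjch : ∀ x y : V, G.Adj x y → ch x = ch y := by
      intro x y hxy
      exact (hch2 x (ch y) ⟨(hch1 y).1, hxy.reachable.trans (hch1 y).2⟩).symm
    -- flip S within each component so that no chosen vertex lies in it
    set S' : Set V := {x | x ∈ S ↔ ch x ∉ S} with hS'def
    have hchout : ∀ x : V, q x = v0 → x ∉ S' := by
      intro x hx hmem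
      have h1 : x ∈ S ↔ ch x ∉ S := hmem
      rw [hfix x hx] at h1
      tauto
    have hcut_eq : cutEdges G S' = cutEdges G S := by
      ext e
      constructor
      · rintro ⟨he, u, v, rfl, hu, hv⟩
        have hadjuv : G.Adj u v := G.mem_edgeSet.mp he
        rw [mem_cutEdges_iff G S hadjuv]
        have hw := hadjch u v hadjuv
        have hu' : u ∈ S ↔ ch u ∉ S := hu
        have hv' : ¬(v ∈ S ↔ ch v ∉ S) := hv
        rw [← hw] at hv'
        tauto
      · rintro ⟨he, u, v, rfl, hu, hv⟩
        have hadjuv : G.Adj u v := G.mem_edgeSet.mp he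
        rw [mem_cutEdges_iff G S' hadjuv]
        have hw := hadjch u v hadjuv
        have hmemu : u ∈ S' ↔ (u ∈ S ↔ ch u ∉ S) := Iff.rfl
        have hmemv : v ∈ S' ↔ (v ∈ S ↔ ch v ∉ S) := Iff.rfl
        rw [← hw] at hmemv
        tauto
    have hS'ne : S'.Nonempty := by
      rcases Set.eq_empty_or_nonempty S' with h | h
      · exfalso
        have hempty : cutEdges G S = ∅ := by
          rw [← hcut_eq]
          ext e
          simp only [cutEdges, Set.mem_setOf_eq, Set.mem_empty_iff_false, iff_false]
          rintro ⟨-, u, v, -, hu, -⟩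
          rw [h] at hu
          exact hu
        rw [hempty, Set.image_empty] at hScut
        have : (⟨0, hp⟩ : Fin p) ∈ (∅ : Set (Fin p)) := hScut ▸ Set.mem_univ _
        exact this
      · exact h
    refine ⟨q '' S', hS'ne.image q, ?_, ?_⟩
    · obtain ⟨x0, _⟩ := hSne
      intro heq
      have : v0 ∈ q '' S' := heq ▸ Set.mem_univ v0
      obtain ⟨z, hz, hqz⟩ := this
      exact hchout z hqz hz
    · rw [Set.eq_univ_iff_forall]
      intro i
      obtain ⟨e, he, hce⟩ := (Set.eq_univ_iff_forall.mp hScut) i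
      rw [← hcut_eq] at he
      obtain ⟨hE, u, v, rfl, hu, hv⟩ := he
      have hadjuv : G.Adj u v := G.mem_edgeSet.mp hE
      have hqu : q u ≠ v0 := fun h => hchout u h hu
      have hne : q u ≠ q v := by
        intro h
        rcases (hident u v).mp h with rfl | ⟨h1, _⟩
        · exact hadjuv.ne rfl
        · exact hqu h1
      have hGadj : Gq.Adj (q u) (q v) := (hGq _ _).mpr ⟨hne, u, v, hadjuv, rfl, rfl⟩
      have hqvT : q v ∉ q '' S' := by
        rintro ⟨z, hz, hqz⟩
        rcases (hident z v).mp hqz with rfl | ⟨h1, _⟩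
        · exact hv hz
        · exact hchout z h1 hz
      refine ⟨s(q u, q v), ⟨Gq.mem_edgeSet.mpr hGadj, q u, q v, rfl, ⟨u, hu, rfl⟩, hqvT⟩, ?_⟩
      rw [hc' u v hadjuv]
      exact hce
end
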